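/- Every term typable in system D is strongly normalizing for the union of the reduction rules β, δ, γ, and assoc. -/

import Mathlib

/-- Untyped λ-terms in de Bruijn representation. -/
inductive Term : Type
  | var : ℕ → Term
  | lam : Term → Term
  | app : Term → Term → Term
  deriving DecidableEq

namespace Term

/-- Shift (lift) all de Bruijn indices ≥ d by one. -/
def lift (d : ℕ) : Term → Term
  | var n => var (if n < d then n else n + 1)
  | lam t => lam (lift (d + 1) t)
  | app t u => app (lift d t) (lift d u)

/-- Capture-avoiding substitution `t[k := u]` (de Bruijn style). -/
def subst : Term → ℕ → Term → Term
  | var n, k, u => if n = k then u else var (if n < k then n else n - 1)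
  | lam t, k, u => lam (subst t (k + 1) (lift 0 u))
  | app t v, k, u => app (subst t k u) (subst v k u)

/-- Swap the de Bruijn indices d and d+1 (exchange of two adjacent binders). -/
def swap (d : ℕ) : Term → Term
  | var n => var (if n = d then d + 1 else if n = d + 1 then d else n)
  | lam t => lam (swap (d + 1) t)
  | app t u => app (swap d t) (swap d u)

end Term

/-- The four reduction rules. -/
inductive Rule | beta | delta | gamma | assoc

/-- One-step reduction by a given rule (closed under congruence).
β: (λx.M N) ▷ M[x:=N];
δ: (λy.λx.M N) ▷ λx.(λy.M N), x ∉ FV(N);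
γ: (λx.M N P) ▷ (λx.(M P) N), x ∉ FV(P);
assoc: (M (λx.N P)) ▷ (λx.(M N) P), x ∉ FV(M).
Freshness conditions are realized by lifting. -/
inductive Step : Rule → Term → Term → Prop
  | beta (M N) : Step .beta (.app (.lam M) N) (Term.subst M 0 N)
  | delta (M N) : Step .delta (.app (.lam (.lam M)) N)
      (.lam (.app (.lam (Term.swap 0 M)) (Term.lift 0 N)))
  | gamma (M N P) : Step .gamma (.app (.app (.lam M) N) P)
      (.app (.lam (.app M (Term.lift 0 P))) N)
  | assoc (M N P) : Step .assoc (.app M (.app (.lam N) P))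
      (.app (.lam (.app (Term.lift 0 M) N)) P)
  | appCongL {r t t'} (u) : Step r t t' → Step r (.app t u) (.app t' u)
  | appCongR {r u u'} (t) : Step r u u' → Step r (.app t u) (.app t u')
  | lamCong {r t t'} : Step r t t' → Step r (.lam t) (.lam t')

/-- One-step reduction by the union of the four rules. -/
def StepAll (t t' : Term) : Prop := ∃ r, Step r t t'

/-- Strong normalization for the union of β, δ, γ, assoc. -/
def SN (t : Term) : Prop := Acc (fun a b => StepAll b a) t

/-- Strong normalization for β alone. -/
def SNbeta (t : Term) : Prop := Acc (fun a b => Step .beta b a) t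

mutual
/-- Simple types: atoms and arrows with simple codomain. -/
inductive STy : Type
  | atom : ℕ → STy
  | arrow : Ty → STy → STy
/-- Types of system D: intersections of simple types. -/
inductive Ty : Type
  | simple : STy → Ty
  | inter : STy → Ty → Ty
end

/-- Typing judgment of system D (contexts are lists of types, de Bruijn). -/
inductive Typing : List Ty → Term → Ty → Prop
  | var {Γ n A} : Γ[n]? = some A → Typing Γ (.var n) A
  | app {Γ M N A B} : Typing Γ M (.simple (.arrow A B)) → Typing Γ N A →
      Typing Γ (.app M N) (.simple B)
  | lam {Γ M A B} : Typing (A :: Γ) M (.simple B) →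
      Typing Γ (.lam M) (.simple (.arrow A B))
  | interI {Γ M A B} : Typing Γ M (.simple A) → Typing Γ M B →
      Typing Γ M (.inter A B)
  | interE1 {Γ M A B} : Typing Γ M (.inter A B) → Typing Γ M (.simple A)
  | interE2 {Γ M A B} : Typing Γ M (.inter A B) → Typing Γ M B

/-- A term is typable in system D. -/
def Typable (t : Term) : Prop := ∃ Γ A, Typing Γ t A

/-- (H M₁ ... Mₙ). -/
def appList (H : Term) (Ms : List Term) : Term := Ms.foldl .app H

namespace Term

/-! ### Renaming and parallel substitution -/

/-- Lift a renaming under a binder. -/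
def rup (ρ : ℕ → ℕ) : ℕ → ℕ
  | 0 => 0
  | n + 1 => ρ n + 1

/-- Renaming. -/
def rename (ρ : ℕ → ℕ) : Term → Term
  | var n => var (ρ n)
  | lam t => lam (rename (rup ρ) t)
  | app t u => app (rename ρ t) (rename ρ u)

/-- Lift a substitution under a binder. -/
def sup (σ : ℕ → Term) : ℕ → Term
  | 0 => var 0
  | n + 1 => rename Nat.succ (σ n)

/-- Parallel substitution. -/
def msubst (σ : ℕ → Term) : Term → Term
  | var n => σ n
  | lam t => lam (msubst (sup σ) t)
  | app t u => app (msubst σ t) (msubst σ u)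

theorem rup_ext {ρ ρ' : ℕ → ℕ} (h : ∀ n, ρ n = ρ' n) : ∀ n, rup ρ n = rup ρ' n := by
  intro n; cases n <;> simp [rup, h]

theorem rename_ext {ρ ρ' : ℕ → ℕ} (h : ∀ n, ρ n = ρ' n) : ∀ t, rename ρ t = rename ρ' t := by
  intro t
  induction t generalizing ρ ρ' with
  | var n => simp [rename, h]
  | lam t ih => simp [rename]; exact ih (rup_ext h)
  | app a b iha ihb => simp [rename]; exact ⟨iha h, ihb h⟩

theorem sup_ext {σ σ' : ℕ → Term} (h : ∀ n, σ n = σ' n) : ∀ n, sup σ n = sup σ' n := by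
  intro n; cases n <;> simp [sup, h]

theorem msubst_ext {σ σ' : ℕ → Term} (h : ∀ n, σ n = σ' n) : ∀ t, msubst σ t = msubst σ' t := by
  intro t
  induction t generalizing σ σ' with
  | var n => simp [msubst, h]
  | lam t ih => simp [msubst]; exact ih (sup_ext h)
  | app a b iha ihb => simp [msubst]; exact ⟨iha h, ihb h⟩

theorem rename_rename (ρ₁ ρ₂ : ℕ → ℕ) (t : Term) :
    rename ρ₂ (rename ρ₁ t) = rename (fun n => ρ₂ (ρ₁ n)) t := by
  induction t generalizing ρ₁ ρ₂ with
  | var n => simp [rename]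
  | lam t ih =>
      simp [rename, ih]
      apply rename_ext
      intro n; cases n <;> simp [rup]
  | app a b iha ihb => simp [rename, iha, ihb]

theorem msubst_rename (ρ : ℕ → ℕ) (σ : ℕ → Term) (t : Term) :
    msubst σ (rename ρ t) = msubst (fun n => σ (ρ n)) t := by
  induction t generalizing ρ σ with
  | var n => simp [rename, msubst]
  | lam t ih =>
      simp [rename, msubst, ih]
      apply msubst_ext
      intro n; cases n <;> simp [rup, sup]
  | app a b iha ihb => simp [rename, msubst, iha, ihb]

theorem rename_msubst (ρ : ℕ → ℕ) (σ : ℕ → Term) (t : Term) :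
    rename ρ (msubst σ t) = msubst (fun n => rename ρ (σ n)) t := by
  induction t generalizing ρ σ with
  | var n => simp [rename, msubst]
  | lam t ih =>
      simp only [rename, msubst, ih]
      congr 1
      apply msubst_ext
      intro n; cases n with
      | zero => simp [sup, rename, rup]
      | succ n =>
          simp only [sup, rename_rename]
          apply rename_ext
          intro m; simp [rup]
  | app a b iha ihb => simp [rename, msubst, iha, ihb]

theorem msubst_msubst (σ₁ σ₂ : ℕ → Term) (t : Term) :
    msubst σ₂ (msubst σ₁ t) = msubst (fun n => msubst σ₂ (σ₁ n)) t := by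
  induction t generalizing σ₁ σ₂ with
  | var n => simp [msubst]
  | lam t ih =>
      simp [msubst, ih]
      apply msubst_ext
      intro n; cases n <;> simp [sup, msubst, rename_msubst, msubst_rename]
  | app a b iha ihb => simp [msubst, iha, ihb]

theorem rename_id (t : Term) : rename (fun n => n) t = t := by
  induction t with
  | var n => simp [rename]
  | lam t ih =>
      simp [rename]
      rw [rename_ext (ρ' := fun n => n)] ; exact ih
      intro n; cases n <;> simp [rup]
  | app a b iha ihb => simp [rename, iha, ihb]

theorem msubst_id (t : Term) : msubst var t = t := by
  induction t with
  | var n => simp [msubst]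
  | lam t ih =>
      simp [msubst]
      rw [msubst_ext (σ' := var)]; exact ih
      intro n; cases n <;> simp [sup, rename]
  | app a b iha ihb => simp [msubst, iha, ihb]

/-! ### lift, subst, swap as renaming / substitution -/

/-- The renaming underlying `lift`. -/
def lr (d : ℕ) (n : ℕ) : ℕ := if n < d then n else n + 1

/-- The renaming underlying `swap`. -/
def sw (d : ℕ) (n : ℕ) : ℕ := if n = d then d + 1 else if n = d + 1 then d else n

/-- The substitution underlying `subst _ k u`. -/
def sb (k : ℕ) (u : Term) (n : ℕ) : Term :=
  if n = k then u else var (if n < k then n else n - 1)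

theorem lift_eq_rename (d : ℕ) (t : Term) : lift d t = rename (lr d) t := by
  induction t generalizing d with
  | var n => simp [lift, rename, lr]
  | lam t ih =>
      simp only [lift, rename, ih]
      congr 1
      apply rename_ext
      intro n; cases n with
      | zero => simp [rup, lr]
      | succ n => simp only [rup, lr]; split_ifs <;> omega
  | app a b iha ihb => simp [lift, rename, iha, ihb]

theorem swap_eq_rename (d : ℕ) (t : Term) : swap d t = rename (sw d) t := by
  induction t generalizing d with
  | var n => simp [swap, rename, sw]
  | lam t ih =>
      simp only [swap, rename, ih]
      congr 1
      apply rename_ext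
      intro n; cases n with
      | zero => simp [rup, sw]
      | succ n => simp only [rup, sw]; split_ifs <;> omega
  | app a b iha ihb => simp [swap, rename, iha, ihb]

theorem subst_eq_msubst (k : ℕ) (u t : Term) : subst t k u = msubst (sb k u) t := by
  induction t generalizing k u with
  | var n => simp [subst, msubst, sb]
  | lam t ih =>
      simp only [subst, msubst, ih]
      congr 1
      apply msubst_ext
      intro n; cases n with
      | zero =>
          simp only [sup, sb]
          have h1 : ¬ (0 = k + 1) := by omega
          have h2 : 0 < k + 1 := by omega
          simp [h1, h2]
      | succ n =>
          simp only [sup, sb, lift_eq_rename]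
          by_cases h : n = k
          · have : n + 1 = k + 1 := by omega
            simp only [h, this, if_pos rfl, rename_rename]
            apply rename_ext
            intro m; simp [lr]
          · have h' : ¬ (n + 1 = k + 1) := by omega
            simp only [if_neg h, if_neg h', rename]
            congr 1
            split_ifs <;> omega
  | app a b iha ihb => simp [subst, msubst, iha, ihb]

end Term
namespace Term

/-! ### Derived identities -/

/-- Shift all indices up by `d`. -/
def liftn (d : ℕ) (t : Term) : Term := rename (fun n => n + d) t

theorem liftn_zero (t : Term) : liftn 0 t = t := by
  unfold liftn
  rw [rename_ext (ρ' := fun n => n)] ; exact rename_id t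
  intro n; omega

theorem msubst_var_comp (ρ : ℕ → ℕ) (t : Term) :
    msubst (fun n => var (ρ n)) t = rename ρ t := by
  induction t generalizing ρ with
  | var n => simp [msubst, rename]
  | lam t ih =>
      simp only [msubst, rename]
      congr 1
      rw [msubst_ext (σ' := fun n => var (rup ρ n))]
      · exact ih _
      · intro n; cases n <;> simp [sup, rup, rename]
  | app a b iha ihb => simp [msubst, rename, iha, ihb]

theorem lift_liftn {c d : ℕ} (h : c ≤ d) (v : Term) :
    lift c (liftn d v) = liftn (d + 1) v := by
  simp only [lift_eq_rename, liftn, rename_rename]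
  apply rename_ext
  intro n; simp only [lr]; split_ifs <;> first | contradiction | omega

theorem subst_liftn {k d : ℕ} (h : k < d) (v Q : Term) :
    subst (liftn d v) k Q = liftn (d - 1) v := by
  simp only [subst_eq_msubst, liftn, msubst_rename]
  rw [msubst_ext (σ' := fun n => var (n + (d - 1)))]
  · exact msubst_var_comp _ v
  · intro n; simp only [sb]
    have h1 : ¬ (n + d = k) := by omega
    have h2 : ¬ (n + d < k) := by omega
    simp [h1, h2]; omega

theorem subst_lift_cancel (k : ℕ) (t u : Term) : subst (lift k t) k u = t := by
  simp only [subst_eq_msubst, lift_eq_rename, msubst_rename]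
  rw [msubst_ext (σ' := var)]
  · exact msubst_id t
  · intro n; simp only [sb, lr]
    split_ifs <;> first | rfl | omega

theorem subst0_msubst (σ : ℕ → Term) (a b : Term) :
    msubst σ (subst a 0 b) = subst (msubst (sup σ) a) 0 (msubst σ b) := by
  simp only [subst_eq_msubst, msubst_msubst]
  apply msubst_ext
  intro n; cases n with
  | zero => simp [sb, sup, msubst]
  | succ n =>
      have h1 : sb 0 b (n+1) = var n := by simp [sb]
      have h2 : sup σ (n+1) = rename Nat.succ (σ n) := rfl
      rw [h1, h2, msubst_rename]
      have h3 : msubst (fun m => sb 0 (msubst σ b) (Nat.succ m)) (σ n) = msubst var (σ n) := by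
        apply msubst_ext; intro m; simp [sb]
      simp only [msubst]
      rw [h3, msubst_id]

theorem rename0_subst (ρ : ℕ → ℕ) (a b : Term) :
    rename ρ (subst a 0 b) = subst (rename (rup ρ) a) 0 (rename ρ b) := by
  simp only [subst_eq_msubst, rename_msubst, msubst_rename]
  apply msubst_ext
  intro n; cases n with
  | zero => simp [sb, rup]
  | succ n =>
      have h1 : sb 0 b (n+1) = var n := by simp [sb]
      have h2 : rup ρ (n+1) = ρ n + 1 := rfl
      rw [h1, h2]
      have h3 : sb 0 (rename ρ b) (ρ n + 1) = var (ρ n) := by simp [sb]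
      simp [rename, h3]

theorem swap0_subst0 (u Q : Term) : subst (swap 0 u) 0 Q = subst u 1 Q := by
  simp only [subst_eq_msubst, swap_eq_rename, msubst_rename]
  apply msubst_ext
  intro n
  match n with
  | 0 => simp [sw, sb]
  | 1 => simp [sw, sb]
  | (m+2) =>
      have h0 : sw 0 (m+2) = m+2 := by simp only [sw]; split_ifs <;> first | contradiction | omega
      rw [h0]
      simp only [sb]
      have ha : ¬ (m + 2 = 0) := by omega
      have hb : ¬ (m + 2 = 1) := by omega
      have hc : ¬ (m + 2 < 1) := by omega
      simp [ha, hb, hc]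

theorem msubst_sup2_swap0 (σ : ℕ → Term) (M : Term) :
    msubst (sup (sup σ)) (swap 0 M) = swap 0 (msubst (sup (sup σ)) M) := by
  simp only [swap_eq_rename, msubst_rename, rename_msubst]
  apply msubst_ext
  intro n
  match n with
  | 0 => simp [sw, sup, rename]
  | 1 => simp [sw, sup, rename]
  | (m+2) =>
      have h0 : sw 0 (m+2) = m+2 := by simp only [sw]; split_ifs <;> first | contradiction | omega
      rw [h0]
      show sup (sup σ) (m+2) = rename (sw 0) (sup (sup σ) (m+2))
      have h2 : sup (sup σ) (m+2) = rename Nat.succ (rename Nat.succ (σ m)) := rfl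
      rw [h2, rename_rename, rename_rename]
      apply rename_ext
      intro j
      simp only [sw]; split_ifs <;> first | contradiction | omega

theorem rename_rup2_swap0 (ρ : ℕ → ℕ) (M : Term) :
    rename (rup (rup ρ)) (swap 0 M) = swap 0 (rename (rup (rup ρ)) M) := by
  simp only [swap_eq_rename, rename_rename]
  apply rename_ext
  intro n
  match n with
  | 0 => simp [sw, rup]
  | 1 => simp [sw, rup]
  | (m+2) =>
      have h0 : sw 0 (m+2) = m+2 := by simp only [sw]; split_ifs <;> first | contradiction | omega
      rw [h0]
      show rup (rup ρ) (m+2) = sw 0 (rup (rup ρ) (m+2))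
      have h2 : rup (rup ρ) (m+2) = ρ m + 2 := rfl
      rw [h2]
      simp only [sw]; split_ifs <;> first | contradiction | omega

theorem msubst_sup_lift0 (σ : ℕ → Term) (N : Term) :
    msubst (sup σ) (lift 0 N) = lift 0 (msubst σ N) := by
  simp only [lift_eq_rename, msubst_rename, rename_msubst]
  apply msubst_ext
  intro n
  have h : lr 0 n = n + 1 := by simp [lr]
  rw [h]
  show rename Nat.succ (σ n) = rename (lr 0) (σ n)
  apply rename_ext
  intro m; simp [lr]

theorem rename_rup_lift0 (ρ : ℕ → ℕ) (N : Term) :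
    rename (rup ρ) (lift 0 N) = lift 0 (rename ρ N) := by
  simp only [lift_eq_rename, rename_rename]
  apply rename_ext
  intro n
  have h : lr 0 n = n + 1 := by simp [lr]
  rw [h]
  show rup ρ (n+1) = lr 0 (ρ n)
  simp [rup, lr]

end Term
namespace Term

/-! ### Step functoriality and reflection -/

theorem step_rename {r : Rule} {t t' : Term} (h : Step r t t') (ρ : ℕ → ℕ) :
    Step r (rename ρ t) (rename ρ t') := by
  induction h generalizing ρ with
  | beta M N =>
      have := Step.beta (rename (rup ρ) M) (rename ρ N)
      rwa [← rename0_subst] at this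
  | delta M N =>
      have := Step.delta (rename (rup (rup ρ)) M) (rename ρ N)
      simp only [rename]
      rw [rename_rup2_swap0, rename_rup_lift0]
      exact this
  | gamma M N P =>
      have := Step.gamma (rename (rup ρ) M) (rename ρ N) (rename ρ P)
      simp only [rename]
      rw [rename_rup_lift0]
      exact this
  | assoc M N P =>
      have := Step.assoc (rename ρ M) (rename (rup ρ) N) (rename ρ P)
      simp only [rename]
      rw [rename_rup_lift0]
      exact this
  | appCongL u _ ih => exact Step.appCongL _ (ih ρ)
  | appCongR t _ ih => exact Step.appCongR _ (ih ρ)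
  | lamCong _ ih => exact Step.lamCong (ih (rup ρ))

theorem step_msubst {r : Rule} {t t' : Term} (h : Step r t t') (σ : ℕ → Term) :
    Step r (msubst σ t) (msubst σ t') := by
  induction h generalizing σ with
  | beta M N =>
      have := Step.beta (msubst (sup σ) M) (msubst σ N)
      rwa [← subst0_msubst] at this
  | delta M N =>
      have := Step.delta (msubst (sup (sup σ)) M) (msubst σ N)
      simp only [msubst]
      rw [msubst_sup2_swap0, msubst_sup_lift0]
      exact this
  | gamma M N P =>
      have := Step.gamma (msubst (sup σ) M) (msubst σ N) (msubst σ P)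
      simp only [msubst]
      rw [msubst_sup_lift0]
      exact this
  | assoc M N P =>
      have := Step.assoc (msubst σ M) (msubst (sup σ) N) (msubst σ P)
      simp only [msubst]
      rw [msubst_sup_lift0]
      exact this
  | appCongL u _ ih => exact Step.appCongL _ (ih σ)
  | appCongR t _ ih => exact Step.appCongR _ (ih σ)
  | lamCong _ ih => exact Step.lamCong (ih (sup σ))

theorem step_subst {r : Rule} {t t' : Term} (h : Step r t t') (k : ℕ) (Q : Term) :
    Step r (subst t k Q) (subst t' k Q) := by
  rw [subst_eq_msubst, subst_eq_msubst]; exact step_msubst h _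

/-- Reflection of steps along renamings. -/
theorem step_rename_rev {r : Rule} (ρ : ℕ → ℕ) (t s : Term)
    (h : Step r (rename ρ t) s) : ∃ t', Step r t t' ∧ s = rename ρ t' := by
  induction t generalizing ρ s r with
  | var n => simp only [rename] at h; cases h
  | lam t ih =>
      simp only [rename] at h
      cases h with
      | lamCong h =>
          obtain ⟨t', ht', rfl⟩ := ih _ _ h
          exact ⟨lam t', Step.lamCong ht', rfl⟩
  | app a b iha ihb =>
      simp only [rename] at h
      generalize hA : rename ρ a = A at h
      generalize hB : rename ρ b = B at h
      cases h with
      | beta M N =>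
          match a, hA with
          | lam a₀, h₀ =>
              simp only [rename, lam.injEq] at h₀
              refine ⟨subst a₀ 0 b, Step.beta a₀ b, ?_⟩
              rw [rename0_subst, h₀, hB]
      | delta M N =>
          match a, hA with
          | lam (lam a₀), h₀ =>
              simp only [rename, lam.injEq] at h₀
              refine ⟨lam (app (lam (swap 0 a₀)) (lift 0 b)), Step.delta a₀ b, ?_⟩
              simp only [rename]
              rw [rename_rup2_swap0, rename_rup_lift0, h₀, hB]
      | gamma M N P =>
          match a, hA with
          | app (lam a₀) a₁, h₀ =>
              simp only [rename, app.injEq, lam.injEq] at h₀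
              refine ⟨app (lam (app a₀ (lift 0 b))) a₁, Step.gamma a₀ a₁ b, ?_⟩
              simp only [rename]
              rw [rename_rup_lift0, h₀.1, h₀.2, hB]
      | assoc M N P =>
          match b, hB with
          | app (lam b₀) b₁, h₀ =>
              simp only [rename, app.injEq, lam.injEq] at h₀
              refine ⟨app (lam (app (lift 0 a) b₀)) b₁, Step.assoc a b₀ b₁, ?_⟩
              simp only [rename]
              rw [rename_rup_lift0, h₀.1, h₀.2, hA]
      | appCongL u h =>
          rw [← hA] at h
          obtain ⟨a', ha', rfl⟩ := iha _ _ h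
          exact ⟨app a' b, Step.appCongL _ ha', by rw [rename, hB]⟩
      | appCongR t h =>
          rw [← hB] at h
          obtain ⟨b', hb', rfl⟩ := ihb _ _ h
          exact ⟨app a b', Step.appCongR _ hb', by rw [rename, hA]⟩

end Term

/-! ### StepAll and Steps -/

abbrev Steps (t t' : Term) : Prop := Relation.ReflTransGen StepAll t t'

theorem stepAll_rename {t t' : Term} (h : StepAll t t') (ρ : ℕ → ℕ) :
    StepAll (Term.rename ρ t) (Term.rename ρ t') := by
  obtain ⟨r, h⟩ := h; exact ⟨r, Term.step_rename h ρ⟩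

theorem star_rename {t t' : Term} (h : Steps t t') (ρ : ℕ → ℕ) :
    Steps (Term.rename ρ t) (Term.rename ρ t') := by
  induction h with
  | refl => exact .refl
  | tail _ h2 ih => exact .tail ih (stepAll_rename h2 ρ)

theorem stepAll_appL {a a' : Term} (b : Term) (h : StepAll a a') :
    StepAll (.app a b) (.app a' b) := by
  obtain ⟨r, h⟩ := h; exact ⟨r, Step.appCongL _ h⟩

theorem stepAll_appR {b b' : Term} (a : Term) (h : StepAll b b') :
    StepAll (.app a b) (.app a b') := by
  obtain ⟨r, h⟩ := h; exact ⟨r, Step.appCongR _ h⟩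

theorem stepAll_lam {a a' : Term} (h : StepAll a a') :
    StepAll (.lam a) (.lam a') := by
  obtain ⟨r, h⟩ := h; exact ⟨r, Step.lamCong h⟩

theorem star_appL {a a' : Term} (b : Term) (h : Steps a a') :
    Steps (.app a b) (.app a' b) := by
  induction h with
  | refl => exact .refl
  | tail _ h2 ih => exact .tail ih (stepAll_appL b h2)

theorem star_appR {b b' : Term} (a : Term) (h : Steps b b') :
    Steps (.app a b) (.app a b') := by
  induction h with
  | refl => exact .refl
  | tail _ h2 ih => exact .tail ih (stepAll_appR a h2)

theorem star_lam {a a' : Term} (h : Steps a a') : Steps (.lam a) (.lam a') := by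
  induction h with
  | refl => exact .refl
  | tail _ h2 ih => exact .tail ih (stepAll_lam h2)

/-- Pointwise star on a substitution gives star on msubst. -/
theorem star_msubst_pointwise (t : Term) (σ σ' : ℕ → Term)
    (h : ∀ n, Steps (σ n) (σ' n)) : Steps (Term.msubst σ t) (Term.msubst σ' t) := by
  induction t generalizing σ σ' with
  | var n => exact h n
  | lam t ih =>
      apply star_lam
      apply ih
      intro n
      cases n with
      | zero => exact .refl
      | succ n => exact star_rename (h n) Nat.succ
  | app a b iha ihb =>
      exact .trans (star_appL _ (iha _ _ h)) (star_appR _ (ihb _ _ h))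

/-- If the substituted argument steps, the substitution multi-steps. -/
theorem star_subst_arg (u : Term) {v v' : Term} (h : StepAll v v') (k : ℕ) :
    Steps (Term.subst u k v) (Term.subst u k v') := by
  rw [Term.subst_eq_msubst, Term.subst_eq_msubst]
  apply star_msubst_pointwise
  intro n
  unfold Term.sb
  split_ifs <;> first | (exact .single h) | exact .refl
namespace Term

/-! ### Finite list of one-step reducts (completeness only) -/

def reducts : Term → List Term
  | var _ => []
  | lam t => (reducts t).map lam
  | app a b =>
      (match a with
       | lam M =>
           subst M 0 b ::
           (match M with
            | lam M₀ => [lam (app (lam (swap 0 M₀)) (lift 0 b))]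
            | _ => [])
       | app (lam M) N => [app (lam (app M (lift 0 b))) N]
       | _ => []) ++
      (match b with
       | app (lam Z) W => [app (lam (app (lift 0 a) Z)) W]
       | _ => []) ++
      (reducts a).map (fun x => app x b) ++ (reducts b).map (fun x => app a x)

theorem mem_reducts {r : Rule} {t t' : Term} (h : Step r t t') : t' ∈ reducts t := by
  induction h with
  | beta M N => simp [reducts]
  | delta M N => simp [reducts]
  | gamma M N P => simp [reducts]
  | assoc M N P =>
      cases M <;> simp [reducts]
  | appCongL u h ih =>
      simp only [reducts, List.mem_append, List.mem_map]
      exact Or.inl (Or.inr ⟨_, ih, rfl⟩)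
  | appCongR t h ih =>
      simp only [reducts, List.mem_append, List.mem_map]
      exact Or.inr ⟨_, ih, rfl⟩
  | lamCong h ih =>
      simp only [reducts, List.mem_map]
      exact ⟨_, ih, rfl⟩

end Term

/-! ### Numeric bounds on reduction -/

def Bnd : ℕ → Term → Prop
  | 0, t => ∀ t', ¬ StepAll t t'
  | n+1, t => ∀ t', StepAll t t' → Bnd n t'

theorem bnd_mono : ∀ n n' t, Bnd n t → n ≤ n' → Bnd n' t := by
  intro n
  induction n using Nat.strong_induction_on with
  | _ n ih =>
      intro n' t h hle
      match n, n' with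
      | 0, 0 => exact h
      | 0, n'+1 => exact fun t' hs => absurd hs (h t')
      | n+1, n'+1 =>
          intro t' hs
          exact ih n (by omega) n' t' (h t' hs) (by omega)

theorem bnd_step {n : ℕ} {t t' : Term} (h : Bnd n t) (hs : StepAll t t') :
    ∃ m, m < n ∧ Bnd m t' := by
  match n with
  | 0 => exact absurd hs (h t')
  | n+1 => exact ⟨n, Nat.lt_succ_self _, h t' hs⟩

theorem bnd_steps {n : ℕ} {t t' : Term} (h : Bnd n t) (hs : Steps t t') :
    ∃ m, m ≤ n ∧ Bnd m t' := by
  induction hs with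
  | refl => exact ⟨n, le_refl _, h⟩
  | tail _ h2 ih =>
      rcases ih with ⟨m, hm, hb⟩
      rcases bnd_step hb h2 with ⟨m', hm', hb'⟩
      exact ⟨m', by omega, hb'⟩

theorem sn_of_bnd : ∀ n t, Bnd n t → SN t := by
  intro n
  induction n using Nat.strong_induction_on with
  | _ n ih =>
      intro t h
      constructor
      intro t' hs
      rcases bnd_step h hs with ⟨m, hm, hb⟩
      exact ih m hm t' hb

theorem exists_list_bound (l : List Term) (P : Term → ℕ → Prop)
    (Pmono : ∀ x m n, P x m → m ≤ n → P x n)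
    (h : ∀ x ∈ l, ∃ n, P x n) : ∃ N, ∀ x ∈ l, P x N := by
  induction l with
  | nil => exact ⟨0, by simp⟩
  | cons a l ih =>
      rcases h a (by simp) with ⟨n, hn⟩
      rcases ih (fun x hx => h x (by simp [hx])) with ⟨N, hN⟩
      refine ⟨max n N, ?_⟩
      intro x hx
      rcases List.mem_cons.mp hx with rfl | hx
      · exact Pmono _ _ _ hn (le_max_left _ _)
      · exact Pmono _ _ _ (hN x hx) (le_max_right _ _)

theorem bnd_of_sn {t : Term} (h : SN t) : ∃ n, Bnd n t := by
  induction h with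
  | intro t _ ih =>
      have hl : ∀ x ∈ Term.reducts t, ∃ n, (StepAll t x → Bnd n x) := by
        intro x _
        by_cases hs : StepAll t x
        · rcases ih x hs with ⟨n, hn⟩
          exact ⟨n, fun _ => hn⟩
        · exact ⟨0, fun c => absurd c hs⟩
      rcases exists_list_bound _ (fun x n => StepAll t x → Bnd n x)
        (fun x m n hm hle hs => bnd_mono _ _ _ (hm hs) hle) hl with ⟨N, hN⟩
      refine ⟨N + 1, fun t' hs => ?_⟩
      rcases hs with ⟨r, hr⟩
      exact hN t' (Term.mem_reducts hr) ⟨r, hr⟩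

theorem bnd_rename : ∀ n (t : Term) (ρ : ℕ → ℕ), Bnd n t → Bnd n (Term.rename ρ t) := by
  intro n
  induction n using Nat.strong_induction_on with
  | _ n ih =>
      intro t ρ h
      match n with
      | 0 =>
          intro s hs
          rcases hs with ⟨r, hr⟩
          rcases Term.step_rename_rev ρ t s hr with ⟨t', ht', rfl⟩
          exact h t' ⟨r, ht'⟩
      | n+1 =>
          intro s hs
          rcases hs with ⟨r, hr⟩
          rcases Term.step_rename_rev ρ t s hr with ⟨t', ht', rfl⟩
          exact ih n (by omega) t' ρ (h t' ⟨r, ht'⟩)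

theorem bnd_appR : ∀ n (a b : Term), Bnd n (.app a b) → Bnd n b := by
  intro n
  induction n using Nat.strong_induction_on with
  | _ n ih =>
      intro a b h
      match n with
      | 0 => exact fun b' hs => absurd (stepAll_appR a hs) (h _)
      | n+1 =>
          intro b' hs
          exact ih n (by omega) a b' (h _ (stepAll_appR a hs))

theorem bnd_arg_aux : ∀ n (Z W : Term), Bnd n (.app (.lam Z) W) → Bnd (n - 1) W := by
  intro n
  induction n using Nat.strong_induction_on with
  | _ n ih =>
      intro Z W h
      match n with
      | 0 => exact absurd ⟨Rule.beta, Step.beta Z W⟩ (fun c => h _ c)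
      | 1 =>
          intro W' hs
          have h2 : Bnd 0 (.app (.lam Z) W') := h _ (stepAll_appR _ hs)
          exact absurd ⟨Rule.beta, Step.beta Z W'⟩ (fun c => h2 _ c)
      | n+2 =>
          intro W' hs
          have h2 : Bnd (n+1) (.app (.lam Z) W') := h _ (stepAll_appR _ hs)
          have := ih (n+1) (by omega) Z W' h2
          simpa using this

theorem bnd_arg_lt {Z W : Term} {n : ℕ} (h : Bnd n (.app (.lam Z) W)) :
    ∃ m, m < n ∧ Bnd m W := by
  have h1 : 1 ≤ n := by
    rcases bnd_step h ⟨Rule.beta, Step.beta Z W⟩ with ⟨k, hk, _⟩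
    omega
  exact ⟨n - 1, by omega, bnd_arg_aux n Z W h⟩

/-! ### SN basics -/

theorem sn_of_stepAll {t t' : Term} (h : SN t) (hs : StepAll t t') : SN t' :=
  Acc.inv h hs

theorem sn_of_steps {t t' : Term} (h : SN t) (hs : Steps t t') : SN t' := by
  induction hs with
  | refl => exact h
  | tail _ h2 ih => exact Acc.inv ih h2

theorem sn_app_left : ∀ {x : Term}, SN x → ∀ a b, x = .app a b → SN a := by
  intro x h
  induction h with
  | intro x _ ih =>
      rintro a b rfl
      constructor
      intro a' ha'
      exact ih _ (stepAll_appL b ha') a' b rfl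

theorem sn_app_left' {a b : Term} (h : SN (.app a b)) : SN a :=
  sn_app_left h a b rfl
namespace Term

/-! ### Polynomial interpretation decreasing under permutation rules -/

def pint : Term → ℕ
  | var _ => 1
  | lam t => pint t + 1
  | app a b => pint a * (2 * pint b + 1)

theorem pint_pos (t : Term) : 1 ≤ pint t := by
  induction t with
  | var n => simp [pint]
  | lam t ih => simp [pint]
  | app a b iha ihb =>
      simp only [pint]
      have := Nat.mul_pos (show 0 < pint a by omega) (show 0 < 2 * pint b + 1 by omega)
      omega

theorem pint_rename (ρ : ℕ → ℕ) (t : Term) : pint (rename ρ t) = pint t := by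
  induction t generalizing ρ with
  | var n => simp [rename, pint]
  | lam t ih => simp [rename, pint, ih]
  | app a b iha ihb => simp [rename, pint, iha, ihb]

theorem pint_swap (d : ℕ) (t : Term) : pint (swap d t) = pint t := by
  rw [swap_eq_rename]; exact pint_rename _ _

theorem pint_lift (d : ℕ) (t : Term) : pint (lift d t) = pint t := by
  rw [lift_eq_rename]; exact pint_rename _ _

theorem pint_pi {r : Rule} {t t' : Term} (h : Step r t t')
    (hr : r = Rule.delta ∨ r = Rule.gamma ∨ r = Rule.assoc) : pint t' < pint t := by
  induction h with
  | beta M N => simp at hr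
  | delta M N =>
      simp only [pint, pint_swap, pint_lift]
      have h1 := pint_pos M
      have h2 := pint_pos N
      nlinarith
  | gamma M N P =>
      simp only [pint, pint_lift]
      have h1 := pint_pos M
      have h2 := pint_pos N
      have h3 := pint_pos P
      nlinarith
  | assoc M N P =>
      simp only [pint, pint_lift]
      have h1 := pint_pos M
      have h2 := pint_pos N
      have h3 := pint_pos P
      nlinarith
  | appCongL u _ ih =>
      simp only [pint]
      have h2 := pint_pos u
      have := ih hr
      nlinarith
  | appCongR t _ ih =>
      simp only [pint]
      have h1 := pint_pos t
      have := ih hr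
      nlinarith
  | lamCong _ ih =>
      simp only [pint]
      have := ih hr
      omega

end Term
/-! ### Frames and plugging -/

inductive Frame : Type
  | appL : Term → Frame
  | lamF : Frame

def apF : Frame → Term → Term
  | .appL P, t => .app t P
  | .lamF, t => .lam t

def plug : List Frame → Term → Term
  | [], t => t
  | F :: K, t => plug K (apF F t)

def depthK : List Frame → ℕ
  | [] => 0
  | .appL _ :: K => depthK K
  | .lamF :: K => depthK K + 1

theorem plug_append (K₁ K₂ : List Frame) (t : Term) :
    plug (K₁ ++ K₂) t = plug K₂ (plug K₁ t) := by
  induction K₁ generalizing t with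
  | nil => rfl
  | cons F K ih => simp [plug, ih]

theorem depthK_append (K₁ K₂ : List Frame) :
    depthK (K₁ ++ K₂) = depthK K₁ + depthK K₂ := by
  induction K₁ with
  | nil => simp [depthK]
  | cons F K ih => cases F <;> simp [depthK, ih] <;> omega

theorem step_plug {r : Rule} {a b : Term} (h : Step r a b) (K : List Frame) :
    Step r (plug K a) (plug K b) := by
  induction K generalizing a b with
  | nil => exact h
  | cons F K ih =>
      cases F with
      | appL P => exact ih (Step.appCongL _ h)
      | lamF => exact ih (Step.lamCong h)

theorem steps_plug {a b : Term} (h : Steps a b) (K : List Frame) :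
    Steps (plug K a) (plug K b) := by
  induction h with
  | refl => exact .refl
  | tail _ h2 ih =>
      rcases h2 with ⟨r, hr⟩
      exact .tail ih ⟨r, step_plug hr K⟩

theorem plug_eq_lam {K : List Frame} {x Y : Term} (h : plug K x = .lam Y)
    (hx : ∀ Y', x ≠ .lam Y') : ∃ K', K = K' ++ [Frame.lamF] ∧ Y = plug K' x := by
  induction K using List.reverseRecOn with
  | nil => exact absurd h (hx Y)
  | append_singleton K F _ =>
      rw [plug_append] at h
      cases F with
      | appL P => simp [plug, apF] at h
      | lamF =>
          simp only [plug, apF, Term.lam.injEq] at h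
          exact ⟨K, rfl, h.symm⟩

theorem plug_eq_app {K : List Frame} {x A B : Term} (h : plug K x = .app A B) :
    (∃ K', K = K' ++ [Frame.appL B] ∧ A = plug K' x) ∨ (K = [] ∧ x = .app A B) := by
  induction K using List.reverseRecOn with
  | nil => exact Or.inr ⟨rfl, h⟩
  | append_singleton K F _ =>
      rw [plug_append] at h
      cases F with
      | appL P =>
          simp only [plug, apF, Term.app.injEq] at h
          exact Or.inl ⟨K, by rw [h.2], h.1.symm⟩
      | lamF => simp [plug, apF] at h

/-! ### Substitution and renaming through plugging -/

def supn : ℕ → (ℕ → Term) → (ℕ → Term)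
  | 0, σ => σ
  | j+1, σ => Term.sup (supn j σ)

def rupn : ℕ → (ℕ → ℕ) → (ℕ → ℕ)
  | 0, ρ => ρ
  | j+1, ρ => Term.rup (rupn j ρ)

def subKf (σ : ℕ → Term) : List Frame → List Frame
  | [] => []
  | .appL P :: K => .appL (Term.msubst (supn (depthK K) σ) P) :: subKf σ K
  | .lamF :: K => .lamF :: subKf σ K

def renKf (ρ : ℕ → ℕ) : List Frame → List Frame
  | [] => []
  | .appL P :: K => .appL (Term.rename (rupn (depthK K) ρ) P) :: renKf ρ K
  | .lamF :: K => .lamF :: renKf ρ K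

theorem depthK_subKf (σ : ℕ → Term) (K : List Frame) : depthK (subKf σ K) = depthK K := by
  induction K with
  | nil => rfl
  | cons F K ih => cases F <;> simp [subKf, depthK, ih]

theorem depthK_renKf (ρ : ℕ → ℕ) (K : List Frame) : depthK (renKf ρ K) = depthK K := by
  induction K with
  | nil => rfl
  | cons F K ih => cases F <;> simp [renKf, depthK, ih]

theorem msubst_plug (K : List Frame) (σ : ℕ → Term) (y : Term) :
    Term.msubst σ (plug K y) = plug (subKf σ K) (Term.msubst (supn (depthK K) σ) y) := by
  induction K generalizing y with
  | nil => rfl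
  | cons F K ih =>
      cases F with
      | appL P =>
          show Term.msubst σ (plug K (.app y P)) = _
          rw [ih]
          rfl
      | lamF =>
          show Term.msubst σ (plug K (.lam y)) = _
          rw [ih]
          rfl

theorem rename_plug (K : List Frame) (ρ : ℕ → ℕ) (y : Term) :
    Term.rename ρ (plug K y) = plug (renKf ρ K) (Term.rename (rupn (depthK K) ρ) y) := by
  induction K generalizing y with
  | nil => rfl
  | cons F K ih =>
      cases F with
      | appL P =>
          show Term.rename ρ (plug K (.app y P)) = _
          rw [ih]
          rfl
      | lamF =>
          show Term.rename ρ (plug K (.lam y)) = _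
          rw [ih]
          rfl

/-! ### Pointwise facts about `supn`, `rupn` on lifted terms -/

theorem rupn_ge (j : ℕ) (ρ : ℕ → ℕ) (n : ℕ) (h : j ≤ n) :
    rupn j ρ n = ρ (n - j) + j := by
  induction j generalizing n with
  | zero => simp [rupn]
  | succ j ih =>
      match n, h with
      | n+1, h =>
          show Term.rup (rupn j ρ) (n+1) = _
          rw [show Term.rup (rupn j ρ) (n+1) = rupn j ρ n + 1 from rfl, ih n (by omega)]
          have e : n + 1 - (j + 1) = n - j := by omega
          rw [e]; omega

theorem supn_ge (j : ℕ) (σ : ℕ → Term) (n : ℕ) (h : j ≤ n) :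
    supn j σ n = Term.liftn j (σ (n - j)) := by
  induction j generalizing n with
  | zero => simp [supn, Term.liftn]; rw [Term.rename_ext (ρ' := fun n => n)]; rw [Term.rename_id]; omega
  | succ j ih =>
      match n, h with
      | n+1, h =>
          show Term.sup (supn j σ) (n+1) = _
          rw [show Term.sup (supn j σ) (n+1) = Term.rename Nat.succ (supn j σ n) from rfl,
            ih n (by omega)]
          unfold Term.liftn
          rw [Term.rename_rename]
          have e : n + 1 - (j + 1) = n - j := by omega
          rw [e]
          apply Term.rename_ext
          intro m; omega

/-- frameBeta: substituting under `j` binders misses a `d`-lifted term, unlifting once. -/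
theorem msubst_supn_sb_liftn {j d : ℕ} (h : j < d) (P v : Term) :
    Term.msubst (supn j (Term.sb 0 P)) (Term.liftn d v) = Term.liftn (d - 1) v := by
  unfold Term.liftn
  rw [Term.msubst_rename]
  rw [Term.msubst_ext (σ' := fun n => Term.var (n + (d - 1)))]
  · exact Term.msubst_var_comp _ v
  · intro n
    rw [supn_ge j _ (n + d) (by omega)]
    have h2 : Term.sb 0 P (n + d - j) = Term.var (n + d - j - 1) := by
      unfold Term.sb
      have : ¬ (n + d - j = 0) := by omega
      simp [this]
    rw [h2]
    unfold Term.liftn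
    show Term.rename _ (Term.var _) = _
    unfold Term.rename
    congr 1
    omega

/-- frameDelta: swapping two bound indices below `d` fixes a `d`-lifted term. -/
theorem rename_rupn_sw_liftn {j d : ℕ} (h : j + 2 ≤ d) (v : Term) :
    Term.rename (rupn j (Term.sw 0)) (Term.liftn d v) = Term.liftn d v := by
  unfold Term.liftn
  rw [Term.rename_rename]
  apply Term.rename_ext
  intro n
  rw [rupn_ge j _ (n + d) (by omega)]
  have : Term.sw 0 (n + d - j) = n + d - j := by
    unfold Term.sw
    split_ifs <;> first | contradiction | omega
  omega

/-- frameAssoc: lifting at an index below `d` turns a `d`-lift into a `d+1`-lift. -/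
theorem rename_rupn_lr_liftn {j d : ℕ} (h : j ≤ d) (v : Term) :
    Term.rename (rupn j (Term.lr 0)) (Term.liftn d v) = Term.liftn (d + 1) v := by
  unfold Term.liftn
  rw [Term.rename_rename]
  apply Term.rename_ext
  intro n
  rw [rupn_ge j _ (n + d) (by omega)]
  have : Term.lr 0 (n + d - j) = n + d - j + 1 := by
    unfold Term.lr
    split_ifs <;> first | contradiction | omega
  omega
/-! ### Inversion of steps out of a plugged redex -/

theorem plug_snoc (K : List Frame) (F : Frame) (y : Term) :
    plug (K ++ [F]) y = apF F (plug K y) := by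
  rw [plug_append]; rfl

/-- All the ways a term `plug K ((λu) V)` can make a step. -/
inductive KC (r : Rule) (K : List Frame) (u V t₁ : Term) : Prop
  | inU (u₁ : Term) (h : Step r u u₁) (ht : t₁ = plug K (.app (.lam u₁) V))
  | inV (V₁ : Term) (h : Step r V V₁) (ht : t₁ = plug K (.app (.lam u) V₁))
  | headBeta (ht : t₁ = plug K (Term.subst u 0 V))
  | focusDelta (u₀ : Term) (hu : u = .lam u₀)
      (ht : t₁ = plug (.lamF :: K) (.app (.lam (Term.swap 0 u₀)) (Term.lift 0 V)))
  | focusGamma (P : Term) (K₀ : List Frame) (hK : K = .appL P :: K₀)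
      (ht : t₁ = plug K₀ (.app (.lam (.app u (Term.lift 0 P))) V))
  | focusAssoc (Z W : Term) (hV : V = .app (.lam Z) W)
      (ht : t₁ = plug K (.app (.lam (.app (Term.lift 0 (.lam u)) Z)) W))
  | inFrame (Kin : List Frame) (P P₁ : Term) (Kout : List Frame)
      (hK : K = Kin ++ .appL P :: Kout) (h : Step r P P₁)
      (ht : t₁ = plug (Kin ++ .appL P₁ :: Kout) (.app (.lam u) V))
  | frameBeta (Kin : List Frame) (P : Term) (Kout : List Frame)
      (hK : K = Kin ++ .lamF :: .appL P :: Kout)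
      (ht : t₁ = plug Kout (Term.subst (plug Kin (.app (.lam u) V)) 0 P))
  | frameDelta (Kin : List Frame) (P : Term) (Kout : List Frame)
      (hK : K = Kin ++ .lamF :: .lamF :: .appL P :: Kout)
      (ht : t₁ = plug Kout (.lam (.app (.lam (Term.swap 0 (plug Kin (.app (.lam u) V))))
        (Term.lift 0 P))))
  | frameGamma (Kin : List Frame) (N P : Term) (Kout : List Frame)
      (hK : K = Kin ++ .lamF :: .appL N :: .appL P :: Kout)
      (ht : t₁ = plug Kout (.app (.lam (.app (plug Kin (.app (.lam u) V)) (Term.lift 0 P))) N))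
  | frameAssoc (Kin : List Frame) (Z W : Term) (Kout : List Frame)
      (hK : K = Kin ++ .appL (.app (.lam Z) W) :: Kout)
      (ht : t₁ = plug Kout (.app (.lam (.app (Term.lift 0 (plug Kin (.app (.lam u) V))) Z)) W))

/-- Push a `KC` certificate through one extra outer frame. -/
theorem KC.frame {r : Rule} {K : List Frame} {u V s : Term} (F : Frame)
    (kc : KC r K u V s) : KC r (K ++ [F]) u V (apF F s) := by
  rcases kc with
      ⟨u₁, h, ht⟩ | ⟨V₁, h, ht⟩ | ht | ⟨u₀, hu, ht⟩ | ⟨P, K₀, hK, ht⟩ | ⟨Z, W, hV, ht⟩ |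
      ⟨Kin, P, P₁, Kout, hK, h, ht⟩ | ⟨Kin, P, Kout, hK, ht⟩ | ⟨Kin, P, Kout, hK, ht⟩ |
      ⟨Kin, N, P, Kout, hK, ht⟩ | ⟨Kin, Z, W, Kout, hK, ht⟩
  · exact .inU u₁ h (by rw [ht, ← plug_snoc])
  · exact .inV V₁ h (by rw [ht, ← plug_snoc])
  · exact .headBeta (by rw [ht, ← plug_snoc])
  · exact .focusDelta u₀ hu (by rw [ht, ← plug_snoc]; rfl)
  · exact .focusGamma P (K₀ ++ [F]) (by rw [hK]; rfl) (by rw [ht, ← plug_snoc])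
  · exact .focusAssoc Z W hV (by rw [ht, ← plug_snoc])
  · exact .inFrame Kin P P₁ (Kout ++ [F]) (by rw [hK]; simp) h
      (by rw [ht, ← plug_snoc]; simp)
  · exact .frameBeta Kin P (Kout ++ [F]) (by rw [hK]; simp) (by rw [ht, ← plug_snoc])
  · exact .frameDelta Kin P (Kout ++ [F]) (by rw [hK]; simp) (by rw [ht, ← plug_snoc])
  · exact .frameGamma Kin N P (Kout ++ [F]) (by rw [hK]; simp) (by rw [ht, ← plug_snoc])
  · exact .frameAssoc Kin Z W (Kout ++ [F]) (by rw [hK]; simp) (by rw [ht, ← plug_snoc])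

theorem invKey (K : List Frame) :
    ∀ (u V t₁ : Term) (r : Rule), Step r (plug K (.app (.lam u) V)) t₁ → KC r K u V t₁ := by
  induction K using List.reverseRecOn with
  | nil =>
      intro u V t₁ r h
      generalize hx : Term.app (Term.lam u) V = x at h
      cases h with
      | beta M N =>
          obtain ⟨h1, h2⟩ := Term.app.inj hx
          obtain h1 := Term.lam.inj h1
          subst h1; subst h2
          exact .headBeta rfl
      | delta M N =>
          obtain ⟨h1, h2⟩ := Term.app.inj hx
          obtain h1 := Term.lam.inj h1
          subst h2
          exact .focusDelta M h1 rfl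
      | gamma M N P =>
          obtain ⟨h1, _⟩ := Term.app.inj hx
          exact absurd h1 (by simp)
      | assoc M N P =>
          obtain ⟨h1, h2⟩ := Term.app.inj hx
          exact .focusAssoc N P h2 (by rw [← h1]; rfl)
      | lamCong h => exact absurd hx (by simp)
      | appCongL w h =>
          obtain ⟨h1, h2⟩ := Term.app.inj hx
          subst h2
          rw [← h1] at h
          cases h with
          | lamCong h' => exact .inU _ h' rfl
      | appCongR w h =>
          obtain ⟨h1, h2⟩ := Term.app.inj hx
          subst h2
          rw [← h1]
          exact .inV _ h rfl
  | append_singleton K F ih =>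
      intro u V t₁ r h
      rw [plug_snoc] at h
      cases F with
      | lamF =>
          simp only [apF] at h
          cases h with
          | lamCong h' =>
              exact KC.frame Frame.lamF (ih u V _ r h')
      | appL P =>
          simp only [apF] at h
          generalize hx : Term.app (plug K (Term.app (Term.lam u) V)) P = x at h
          cases h with
          | beta M N =>
              obtain ⟨h1, h2⟩ := Term.app.inj hx
              obtain ⟨K', rfl, hM⟩ := plug_eq_lam h1 (by intro Y' c; cases c)
              refine .frameBeta K' N [] (by rw [h2]; simp) ?_
              rw [hM]; rfl
          | delta M N =>
              obtain ⟨h1, h2⟩ := Term.app.inj hx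
              obtain ⟨K', rfl, hM⟩ := plug_eq_lam h1 (by intro Y' c; cases c)
              obtain ⟨K'', rfl, hM2⟩ := plug_eq_lam hM.symm (by intro Y' c; cases c)
              refine .frameDelta K'' N [] (by rw [h2]; simp) ?_
              rw [hM2]; rfl
          | gamma M N P' =>
              obtain ⟨h1, h2⟩ := Term.app.inj hx
              rcases plug_eq_app h1 with ⟨K', rfl, hM⟩ | ⟨rfl, hM⟩
              · obtain ⟨K'', rfl, hM2⟩ := plug_eq_lam hM.symm (by intro Y' c; cases c)
                refine .frameGamma K'' N P' [] (by rw [h2]; simp) ?_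
                rw [hM2]; rfl
              · obtain ⟨hM1, hM2⟩ := Term.app.inj hM
                obtain hM1 := Term.lam.inj hM1
                refine .focusGamma P' [] (by rw [h2]; rfl) ?_
                rw [hM1, hM2]; rfl
          | assoc M N P' =>
              obtain ⟨h1, h2⟩ := Term.app.inj hx
              refine .frameAssoc K N P' [] (by rw [h2]) ?_
              rw [← h1]
              rfl
          | appCongL w h =>
              obtain ⟨h1, h2⟩ := Term.app.inj hx
              rw [← h1] at h
              have := KC.frame (Frame.appL P) (ih u V _ r h)
              simpa [apF, h2] using this
          | appCongR w h =>
              obtain ⟨h1, h2⟩ := Term.app.inj hx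
              subst h1
              subst h2
              refine .inFrame K P _ [] rfl h ?_
              rw [plug_snoc]; rfl
          | lamCong h => exact absurd hx (by simp)
/-! ### The key closure lemma -/

theorem plug_cons_appL (P : Term) (K : List Frame) (y : Term) :
    plug (.appL P :: K) y = plug K (.app y P) := rfl

theorem plug_cons_lamF (K : List Frame) (y : Term) :
    plug (.lamF :: K) y = plug K (.lam y) := rfl

theorem step_plug_arg {r : Rule} {P P₁ : Term} (h : Step r P P₁)
    (Kin Kout : List Frame) (y : Term) :
    Step r (plug (Kin ++ .appL P :: Kout) y) (plug (Kin ++ .appL P₁ :: Kout) y) := by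
  rw [plug_append, plug_append, plug_cons_appL, plug_cons_appL]
  exact step_plug (Step.appCongR _ h) Kout

theorem plug_decomp_beta (Kin Kout : List Frame) (P y : Term) :
    plug (Kin ++ .lamF :: .appL P :: Kout) y = plug Kout (.app (.lam (plug Kin y)) P) := by
  rw [plug_append]; rfl

theorem plug_decomp_delta (Kin Kout : List Frame) (P y : Term) :
    plug (Kin ++ .lamF :: .lamF :: .appL P :: Kout) y =
      plug Kout (.app (.lam (.lam (plug Kin y))) P) := by
  rw [plug_append]; rfl

theorem plug_decomp_gamma (Kin Kout : List Frame) (N P y : Term) :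
    plug (Kin ++ .lamF :: .appL N :: .appL P :: Kout) y =
      plug Kout (.app (.app (.lam (plug Kin y)) N) P) := by
  rw [plug_append]; rfl

theorem plug_decomp_arg (Kin Kout : List Frame) (Q y : Term) :
    plug (Kin ++ .appL Q :: Kout) y = plug Kout (.app (plug Kin y) Q) := by
  rw [plug_append]; rfl

theorem KEY : ∀ (n₁ n₂ p : ℕ) (K : List Frame) (u v : Term),
    Bnd n₁ v →
    Bnd n₂ (plug K (Term.subst u 0 (Term.liftn (depthK K) v))) →
    Term.pint (plug K (.app (.lam u) (Term.liftn (depthK K) v))) ≤ p →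
    SN (plug K (.app (.lam u) (Term.liftn (depthK K) v))) := by
  intro n₁ n₂ p K u v hv hU hp
  constructor
  intro t₁ hs
  rcases hs with ⟨r, hr⟩
  rcases invKey K u (Term.liftn (depthK K) v) t₁ r hr with
      ⟨u₁, h, ht⟩ | ⟨V₁, h, ht⟩ | ht | ⟨u₀, hu, ht⟩ | ⟨P, K₀, hK, ht⟩ | ⟨Z, W, hV, ht⟩ |
      ⟨Kin, P, P₁, Kout, hK, h, ht⟩ | ⟨Kin, P, Kout, hK, ht⟩ | ⟨Kin, P, Kout, hK, ht⟩ |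
      ⟨Kin, N, P, Kout, hK, ht⟩ | ⟨Kin, Z, W, Kout, hK, ht⟩
  -- case inU
  · subst ht
    have hstep : Step r (plug K (Term.subst u 0 (Term.liftn (depthK K) v)))
        (plug K (Term.subst u₁ 0 (Term.liftn (depthK K) v))) :=
      step_plug (Term.step_subst h 0 _) K
    rcases bnd_step hU ⟨r, hstep⟩ with ⟨m, hm, hb⟩
    exact KEY n₁ m _ K u₁ v hv hb (le_refl _)
  -- case inV
  · subst ht
    rcases Term.step_rename_rev _ v V₁ h with ⟨v', hv', rfl⟩
    rcases bnd_step hv ⟨r, hv'⟩ with ⟨m, hm, hb⟩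
    have hsteps : Steps (plug K (Term.subst u 0 (Term.liftn (depthK K) v)))
        (plug K (Term.subst u 0 (Term.liftn (depthK K) v'))) :=
      steps_plug (star_subst_arg u ⟨r, Term.step_rename hv' _⟩ 0) K
    rcases bnd_steps hU hsteps with ⟨m₂, _, hb₂⟩
    exact KEY m m₂ _ K u v' hb hb₂ (le_refl _)
  -- case headBeta
  · subst ht
    exact sn_of_bnd n₂ _ hU
  -- case focusDelta
  · subst ht; subst hu
    have hVlift : Term.lift 0 (Term.liftn (depthK K) v) = Term.liftn (depthK K + 1) v :=
      Term.lift_liftn (Nat.zero_le _) v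
    have hUnf : plug (Frame.lamF :: K)
        (Term.subst (Term.swap 0 u₀) 0 (Term.liftn (depthK (Frame.lamF :: K)) v)) =
        plug K (Term.subst (Term.lam u₀) 0 (Term.liftn (depthK K) v)) := by
      rw [plug_cons_lamF]
      rw [show depthK (Frame.lamF :: K) = depthK K + 1 from rfl, ← hVlift]
      rw [show Term.subst (Term.lam u₀) 0 (Term.liftn (depthK K) v)
        = Term.lam (Term.subst u₀ 1 (Term.lift 0 (Term.liftn (depthK K) v))) from rfl]
      rw [Term.swap0_subst0]
    have hpi : Term.pint (plug (Frame.lamF :: K)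
        (.app (.lam (Term.swap 0 u₀)) (Term.liftn (depthK (Frame.lamF :: K)) v))) < p := by
      rw [show depthK (Frame.lamF :: K) = depthK K + 1 from rfl, ← hVlift]
      have := Term.pint_pi (step_plug (Step.delta u₀ (Term.liftn (depthK K) v)) K) (Or.inl rfl)
      rw [plug_cons_lamF]
      omega
    have hcall := KEY n₁ n₂ (Term.pint (plug (Frame.lamF :: K)
        (.app (.lam (Term.swap 0 u₀)) (Term.liftn (depthK (Frame.lamF :: K)) v))))
        (Frame.lamF :: K) (Term.swap 0 u₀) v hv (by rw [hUnf]; exact hU) (le_refl _)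
    rw [show depthK (Frame.lamF :: K) = depthK K + 1 from rfl, ← hVlift] at hcall
    exact hcall
  -- case focusGamma
  · subst ht; subst hK
    have hUnf : plug K₀
        (Term.subst (.app u (Term.lift 0 P)) 0 (Term.liftn (depthK K₀) v)) =
        plug (Frame.appL P :: K₀)
          (Term.subst u 0 (Term.liftn (depthK (Frame.appL P :: K₀)) v)) := by
      rw [plug_cons_appL]
      rw [show depthK (Frame.appL P :: K₀) = depthK K₀ from rfl]
      rw [show Term.subst (.app u (Term.lift 0 P)) 0 (Term.liftn (depthK K₀) v)
        = Term.app (Term.subst u 0 (Term.liftn (depthK K₀) v))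
            (Term.subst (Term.lift 0 P) 0 (Term.liftn (depthK K₀) v)) from rfl]
      rw [Term.subst_lift_cancel]
    have hpi : Term.pint (plug K₀ (.app (.lam (.app u (Term.lift 0 P)))
        (Term.liftn (depthK K₀) v))) < p := by
      have h1 := Term.pint_pi
        (step_plug (Step.gamma u (Term.liftn (depthK K₀) v) P) K₀) (Or.inr (Or.inl rfl))
      rw [show depthK (Frame.appL P :: K₀) = depthK K₀ from rfl, plug_cons_appL] at hp
      omega
    have hcall := KEY n₁ n₂ (Term.pint (plug K₀ (.app (.lam (.app u (Term.lift 0 P)))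
        (Term.liftn (depthK K₀) v))))
        K₀ (.app u (Term.lift 0 P)) v hv (by rw [hUnf]; exact hU) (le_refl _)
    exact hcall
  -- case focusAssoc
  · subst ht
    obtain ⟨Z₀, W₀, rfl, hZ, hW⟩ : ∃ Z₀ W₀, v = .app (.lam Z₀) W₀ ∧
        Z = Term.rename (Term.rup (fun n => n + depthK K)) Z₀ ∧
        W = Term.liftn (depthK K) W₀ := by
      unfold Term.liftn at hV
      match v, hV with
      | .app (.lam Z₀) W₀, hV =>
          simp only [Term.rename, Term.app.injEq, Term.lam.injEq] at hV
          exact ⟨Z₀, W₀, rfl, hV.1.symm, hV.2.symm⟩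
    subst hZ; subst hW
    rcases bnd_step hv ⟨Rule.beta, Step.beta Z₀ W₀⟩ with ⟨m₁, hm₁, hb₁⟩
    have hVstep : StepAll (Term.liftn (depthK K) (.app (.lam Z₀) W₀))
        (Term.liftn (depthK K) (Term.subst Z₀ 0 W₀)) := by
      refine ⟨Rule.beta, ?_⟩
      show Step _ (Term.rename _ _) _
      rw [Term.liftn, Term.rename0_subst]
      exact Step.beta _ _
    have hsteps : Steps
        (plug K (Term.subst u 0 (Term.liftn (depthK K) (.app (.lam Z₀) W₀))))
        (plug K (Term.subst u 0 (Term.liftn (depthK K) (Term.subst Z₀ 0 W₀)))) :=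
      steps_plug (star_subst_arg u hVstep 0) K
    rcases bnd_steps hU hsteps with ⟨m₂, _, hb₂⟩
    have hS : SN (plug K (.app (.lam u) (Term.liftn (depthK K) (Term.subst Z₀ 0 W₀)))) :=
      KEY m₁ m₂ _ K u (Term.subst Z₀ 0 W₀) hb₁ hb₂ (le_refl _)
    rcases bnd_of_sn hS with ⟨nS, hSb⟩
    rcases bnd_arg_lt hv with ⟨mW, hmW, hbW⟩
    have hUnfOut : plug K (Term.subst (.app (.lam (Term.lift 1 u))
        (Term.rename (Term.rup (fun n => n + depthK K)) Z₀)) 0 (Term.liftn (depthK K) W₀)) =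
        plug K (.app (.lam u) (Term.liftn (depthK K) (Term.subst Z₀ 0 W₀))) := by
      congr 1
      rw [show Term.subst (.app (.lam (Term.lift 1 u))
            (Term.rename (Term.rup (fun n => n + depthK K)) Z₀)) 0 (Term.liftn (depthK K) W₀)
          = Term.app (.lam (Term.subst (Term.lift 1 u) 1
              (Term.lift 0 (Term.liftn (depthK K) W₀))))
            (Term.subst (Term.rename (Term.rup (fun n => n + depthK K)) Z₀) 0
              (Term.liftn (depthK K) W₀)) from rfl]
      rw [Term.subst_lift_cancel]
      congr 1
      rw [show Term.liftn (depthK K) (Term.subst Z₀ 0 W₀)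
        = Term.rename (fun n => n + depthK K) (Term.subst Z₀ 0 W₀) from rfl]
      rw [Term.rename0_subst]
      rfl
    have hcall := KEY mW nS _ K (.app (.lam (Term.lift 1 u))
        (Term.rename (Term.rup (fun n => n + depthK K)) Z₀)) W₀ hbW
        (by rw [hUnfOut]; exact hSb) (le_refl _)
    exact hcall
  -- case inFrame
  · subst ht; subst hK
    have hstep := step_plug_arg h Kin Kout
      (Term.subst u 0 (Term.liftn (depthK (Kin ++ Frame.appL P :: Kout)) v))
    have hdeq : depthK (Kin ++ Frame.appL P :: Kout) = depthK (Kin ++ Frame.appL P₁ :: Kout) := by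
      rw [depthK_append, depthK_append]; rfl
    rcases bnd_step hU ⟨r, hstep⟩ with ⟨m, hm, hb⟩
    rw [hdeq] at hb
    rw [hdeq]
    exact KEY n₁ m _ (Kin ++ Frame.appL P₁ :: Kout) u v hv hb (le_refl _)
  -- case frameBeta
  · subst ht; subst hK
    have hdK : depthK (Kin ++ Frame.lamF :: Frame.appL P :: Kout)
        = depthK Kin + depthK Kout + 1 := by
      rw [depthK_append]; rfl
    have hdK1 : depthK (subKf (Term.sb 0 P) Kin ++ Kout) = depthK Kin + depthK Kout := by
      rw [depthK_append, depthK_subKf]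
    have hlt : depthK Kin < depthK (Kin ++ Frame.lamF :: Frame.appL P :: Kout) := by omega
    -- key rewriting identity, for any core z
    have key : ∀ z : Term, Term.subst (plug Kin z) 0 P =
        plug (subKf (Term.sb 0 P) Kin)
          (Term.msubst (supn (depthK Kin) (Term.sb 0 P)) z) := by
      intro z
      rw [Term.subst_eq_msubst, msubst_plug]
    have eCore : Term.msubst (supn (depthK Kin) (Term.sb 0 P))
        (Term.app (Term.lam u) (Term.liftn (depthK (Kin ++ Frame.lamF :: Frame.appL P :: Kout)) v))
        = Term.app (Term.lam (Term.msubst (supn (depthK Kin + 1) (Term.sb 0 P)) u))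
            (Term.liftn (depthK (subKf (Term.sb 0 P) Kin ++ Kout)) v) := by
      rw [show Term.msubst (supn (depthK Kin) (Term.sb 0 P))
            (Term.app (Term.lam u) (Term.liftn (depthK (Kin ++ Frame.lamF :: Frame.appL P :: Kout)) v))
          = Term.app (Term.lam (Term.msubst (supn (depthK Kin + 1) (Term.sb 0 P)) u))
              (Term.msubst (supn (depthK Kin) (Term.sb 0 P))
                (Term.liftn (depthK (Kin ++ Frame.lamF :: Frame.appL P :: Kout)) v)) from rfl]
      rw [msubst_supn_sb_liftn hlt]
      rw [hdK, hdK1, Nat.add_sub_cancel]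
    have eUnf : Term.msubst (supn (depthK Kin) (Term.sb 0 P))
        (Term.subst u 0 (Term.liftn (depthK (Kin ++ Frame.lamF :: Frame.appL P :: Kout)) v))
        = Term.subst (Term.msubst (supn (depthK Kin + 1) (Term.sb 0 P)) u) 0
            (Term.liftn (depthK (subKf (Term.sb 0 P) Kin ++ Kout)) v) := by
      rw [Term.subst0_msubst]
      rw [msubst_supn_sb_liftn hlt]
      rw [hdK, hdK1, Nat.add_sub_cancel]
      rfl
    have hstep : Step Rule.beta
        (plug (Kin ++ Frame.lamF :: Frame.appL P :: Kout)
          (Term.subst u 0 (Term.liftn (depthK (Kin ++ Frame.lamF :: Frame.appL P :: Kout)) v)))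
        (plug (subKf (Term.sb 0 P) Kin ++ Kout)
          (Term.subst (Term.msubst (supn (depthK Kin + 1) (Term.sb 0 P)) u) 0
            (Term.liftn (depthK (subKf (Term.sb 0 P) Kin ++ Kout)) v))) := by
      rw [plug_decomp_beta, plug_append, ← eUnf, ← key]
      exact step_plug (Step.beta _ _) Kout
    rcases bnd_step hU ⟨Rule.beta, hstep⟩ with ⟨m, hm, hb⟩
    have hgoal : plug Kout (Term.subst (plug Kin
        (Term.app (Term.lam u)
          (Term.liftn (depthK (Kin ++ Frame.lamF :: Frame.appL P :: Kout)) v))) 0 P)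
        = plug (subKf (Term.sb 0 P) Kin ++ Kout)
            (Term.app (Term.lam (Term.msubst (supn (depthK Kin + 1) (Term.sb 0 P)) u))
              (Term.liftn (depthK (subKf (Term.sb 0 P) Kin ++ Kout)) v)) := by
      rw [key, eCore, plug_append]
    rw [hgoal]
    exact KEY n₁ m _ (subKf (Term.sb 0 P) Kin ++ Kout)
      (Term.msubst (supn (depthK Kin + 1) (Term.sb 0 P)) u) v hv hb (le_refl _)
  -- case frameDelta
  · subst ht; subst hK
    have hdK : depthK (Kin ++ Frame.lamF :: Frame.lamF :: Frame.appL P :: Kout)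
        = depthK Kin + depthK Kout + 2 := by
      rw [depthK_append]; rfl
    have hdK1 : depthK (renKf (Term.sw 0) Kin
        ++ Frame.lamF :: Frame.appL (Term.lift 0 P) :: Frame.lamF :: Kout)
        = depthK Kin + depthK Kout + 2 := by
      rw [depthK_append, depthK_renKf]; rfl
    have hlt : depthK Kin + 2 ≤ depthK (Kin ++ Frame.lamF :: Frame.lamF :: Frame.appL P :: Kout) := by
      omega
    have key : ∀ z : Term, Term.swap 0 (plug Kin z) =
        plug (renKf (Term.sw 0) Kin)
          (Term.rename (rupn (depthK Kin) (Term.sw 0)) z) := by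
      intro z
      rw [Term.swap_eq_rename, rename_plug]
    have eCore : Term.rename (rupn (depthK Kin) (Term.sw 0))
        (Term.app (Term.lam u)
          (Term.liftn (depthK (Kin ++ Frame.lamF :: Frame.lamF :: Frame.appL P :: Kout)) v))
        = Term.app (Term.lam (Term.rename (rupn (depthK Kin + 1) (Term.sw 0)) u))
            (Term.liftn (depthK (renKf (Term.sw 0) Kin
              ++ Frame.lamF :: Frame.appL (Term.lift 0 P) :: Frame.lamF :: Kout)) v) := by
      rw [show Term.rename (rupn (depthK Kin) (Term.sw 0))
            (Term.app (Term.lam u)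
              (Term.liftn (depthK (Kin ++ Frame.lamF :: Frame.lamF :: Frame.appL P :: Kout)) v))
          = Term.app (Term.lam (Term.rename (rupn (depthK Kin + 1) (Term.sw 0)) u))
              (Term.rename (rupn (depthK Kin) (Term.sw 0))
                (Term.liftn (depthK (Kin ++ Frame.lamF :: Frame.lamF :: Frame.appL P :: Kout)) v))
          from rfl]
      rw [rename_rupn_sw_liftn hlt, hdK, hdK1]
    have eUnf : Term.rename (rupn (depthK Kin) (Term.sw 0))
        (Term.subst u 0
          (Term.liftn (depthK (Kin ++ Frame.lamF :: Frame.lamF :: Frame.appL P :: Kout)) v))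
        = Term.subst (Term.rename (rupn (depthK Kin + 1) (Term.sw 0)) u) 0
            (Term.liftn (depthK (renKf (Term.sw 0) Kin
              ++ Frame.lamF :: Frame.appL (Term.lift 0 P) :: Frame.lamF :: Kout)) v) := by
      rw [Term.rename0_subst]
      rw [rename_rupn_sw_liftn hlt, hdK, hdK1]
      rfl
    have hplug1 : ∀ z : Term,
        plug (renKf (Term.sw 0) Kin
          ++ Frame.lamF :: Frame.appL (Term.lift 0 P) :: Frame.lamF :: Kout) z
        = plug Kout (.lam (.app (.lam (plug (renKf (Term.sw 0) Kin) z)) (Term.lift 0 P))) := by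
      intro z
      rw [plug_append]; rfl
    have hstep : Step Rule.delta
        (plug (Kin ++ Frame.lamF :: Frame.lamF :: Frame.appL P :: Kout)
          (Term.subst u 0
            (Term.liftn (depthK (Kin ++ Frame.lamF :: Frame.lamF :: Frame.appL P :: Kout)) v)))
        (plug (renKf (Term.sw 0) Kin
          ++ Frame.lamF :: Frame.appL (Term.lift 0 P) :: Frame.lamF :: Kout)
          (Term.subst (Term.rename (rupn (depthK Kin + 1) (Term.sw 0)) u) 0
            (Term.liftn (depthK (renKf (Term.sw 0) Kin
              ++ Frame.lamF :: Frame.appL (Term.lift 0 P) :: Frame.lamF :: Kout)) v))) := by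
      rw [plug_decomp_delta, hplug1, ← eUnf, ← key]
      exact step_plug (Step.delta _ _) Kout
    rcases bnd_step hU ⟨Rule.delta, hstep⟩ with ⟨m, hm, hb⟩
    have hgoal : plug Kout (.lam (.app (.lam (Term.swap 0 (plug Kin
        (Term.app (Term.lam u)
          (Term.liftn (depthK (Kin ++ Frame.lamF :: Frame.lamF :: Frame.appL P :: Kout)) v)))))
        (Term.lift 0 P)))
        = plug (renKf (Term.sw 0) Kin
            ++ Frame.lamF :: Frame.appL (Term.lift 0 P) :: Frame.lamF :: Kout)
            (Term.app (Term.lam (Term.rename (rupn (depthK Kin + 1) (Term.sw 0)) u))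
              (Term.liftn (depthK (renKf (Term.sw 0) Kin
                ++ Frame.lamF :: Frame.appL (Term.lift 0 P) :: Frame.lamF :: Kout)) v)) := by
      rw [key, eCore, hplug1]
    rw [hgoal]
    exact KEY n₁ m _ _ (Term.rename (rupn (depthK Kin + 1) (Term.sw 0)) u) v hv hb (le_refl _)
  -- case frameGamma
  · subst ht; subst hK
    have hdeq : depthK (Kin ++ Frame.lamF :: Frame.appL N :: Frame.appL P :: Kout)
        = depthK (Kin ++ Frame.appL (Term.lift 0 P) :: Frame.lamF :: Frame.appL N :: Kout) := by
      rw [depthK_append, depthK_append]; rfl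
    have hplug1 : ∀ z : Term,
        plug (Kin ++ Frame.appL (Term.lift 0 P) :: Frame.lamF :: Frame.appL N :: Kout) z
        = plug Kout (.app (.lam (.app (plug Kin z) (Term.lift 0 P))) N) := by
      intro z
      rw [plug_append]; rfl
    have hstep : Step Rule.gamma
        (plug (Kin ++ Frame.lamF :: Frame.appL N :: Frame.appL P :: Kout)
          (Term.subst u 0
            (Term.liftn (depthK (Kin ++ Frame.lamF :: Frame.appL N :: Frame.appL P :: Kout)) v)))
        (plug (Kin ++ Frame.appL (Term.lift 0 P) :: Frame.lamF :: Frame.appL N :: Kout)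
          (Term.subst u 0
            (Term.liftn (depthK (Kin ++ Frame.appL (Term.lift 0 P)
              :: Frame.lamF :: Frame.appL N :: Kout)) v))) := by
      rw [plug_decomp_gamma, hplug1, ← hdeq]
      exact step_plug (Step.gamma _ _ _) Kout
    rcases bnd_step hU ⟨Rule.gamma, hstep⟩ with ⟨m, hm, hb⟩
    have hgoal : plug Kout (.app (.lam (.app (plug Kin
        (Term.app (Term.lam u)
          (Term.liftn (depthK (Kin ++ Frame.lamF :: Frame.appL N :: Frame.appL P :: Kout)) v)))
        (Term.lift 0 P))) N)
        = plug (Kin ++ Frame.appL (Term.lift 0 P) :: Frame.lamF :: Frame.appL N :: Kout)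
            (Term.app (Term.lam u)
              (Term.liftn (depthK (Kin ++ Frame.appL (Term.lift 0 P)
                :: Frame.lamF :: Frame.appL N :: Kout)) v)) := by
      rw [hplug1, ← hdeq]
    rw [hgoal]
    exact KEY n₁ m _ _ u v hv hb (le_refl _)
  -- case frameAssoc
  · subst ht; subst hK
    have hdK : depthK (Kin ++ Frame.appL (Term.app (Term.lam Z) W) :: Kout)
        = depthK Kin + depthK Kout := by
      rw [depthK_append]; rfl
    have hdK1 : depthK (renKf (Term.lr 0) Kin
        ++ Frame.appL Z :: Frame.lamF :: Frame.appL W :: Kout)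
        = depthK Kin + depthK Kout + 1 := by
      rw [depthK_append, depthK_renKf]; rfl
    have hle : depthK Kin ≤ depthK (Kin ++ Frame.appL (Term.app (Term.lam Z) W) :: Kout) := by
      omega
    have key : ∀ z : Term, Term.lift 0 (plug Kin z) =
        plug (renKf (Term.lr 0) Kin)
          (Term.rename (rupn (depthK Kin) (Term.lr 0)) z) := by
      intro z
      rw [Term.lift_eq_rename, rename_plug]
    have eCore : Term.rename (rupn (depthK Kin) (Term.lr 0))
        (Term.app (Term.lam u)
          (Term.liftn (depthK (Kin ++ Frame.appL (Term.app (Term.lam Z) W) :: Kout)) v))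
        = Term.app (Term.lam (Term.rename (rupn (depthK Kin + 1) (Term.lr 0)) u))
            (Term.liftn (depthK (renKf (Term.lr 0) Kin
              ++ Frame.appL Z :: Frame.lamF :: Frame.appL W :: Kout)) v) := by
      rw [show Term.rename (rupn (depthK Kin) (Term.lr 0))
            (Term.app (Term.lam u)
              (Term.liftn (depthK (Kin ++ Frame.appL (Term.app (Term.lam Z) W) :: Kout)) v))
          = Term.app (Term.lam (Term.rename (rupn (depthK Kin + 1) (Term.lr 0)) u))
              (Term.rename (rupn (depthK Kin) (Term.lr 0))
                (Term.liftn (depthK (Kin ++ Frame.appL (Term.app (Term.lam Z) W) :: Kout)) v))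
          from rfl]
      rw [rename_rupn_lr_liftn hle, hdK, hdK1]
    have eUnf : Term.rename (rupn (depthK Kin) (Term.lr 0))
        (Term.subst u 0
          (Term.liftn (depthK (Kin ++ Frame.appL (Term.app (Term.lam Z) W) :: Kout)) v))
        = Term.subst (Term.rename (rupn (depthK Kin + 1) (Term.lr 0)) u) 0
            (Term.liftn (depthK (renKf (Term.lr 0) Kin
              ++ Frame.appL Z :: Frame.lamF :: Frame.appL W :: Kout)) v) := by
      rw [Term.rename0_subst]
      rw [rename_rupn_lr_liftn hle, hdK, hdK1]
      rfl
    have hplug1 : ∀ z : Term,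
        plug (renKf (Term.lr 0) Kin ++ Frame.appL Z :: Frame.lamF :: Frame.appL W :: Kout) z
        = plug Kout (.app (.lam (.app (plug (renKf (Term.lr 0) Kin) z) Z)) W) := by
      intro z
      rw [plug_append]; rfl
    have hstep : Step Rule.assoc
        (plug (Kin ++ Frame.appL (Term.app (Term.lam Z) W) :: Kout)
          (Term.subst u 0
            (Term.liftn (depthK (Kin ++ Frame.appL (Term.app (Term.lam Z) W) :: Kout)) v)))
        (plug (renKf (Term.lr 0) Kin ++ Frame.appL Z :: Frame.lamF :: Frame.appL W :: Kout)
          (Term.subst (Term.rename (rupn (depthK Kin + 1) (Term.lr 0)) u) 0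
            (Term.liftn (depthK (renKf (Term.lr 0) Kin
              ++ Frame.appL Z :: Frame.lamF :: Frame.appL W :: Kout)) v))) := by
      rw [plug_decomp_arg, hplug1, ← eUnf, ← key]
      exact step_plug (Step.assoc _ _ _) Kout
    rcases bnd_step hU ⟨Rule.assoc, hstep⟩ with ⟨m, hm, hb⟩
    have hgoal : plug Kout (.app (.lam (.app (Term.lift 0 (plug Kin
        (Term.app (Term.lam u)
          (Term.liftn (depthK (Kin ++ Frame.appL (Term.app (Term.lam Z) W) :: Kout)) v)))) Z)) W)
        = plug (renKf (Term.lr 0) Kin ++ Frame.appL Z :: Frame.lamF :: Frame.appL W :: Kout)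
            (Term.app (Term.lam (Term.rename (rupn (depthK Kin + 1) (Term.lr 0)) u))
              (Term.liftn (depthK (renKf (Term.lr 0) Kin
                ++ Frame.appL Z :: Frame.lamF :: Frame.appL W :: Kout)) v)) := by
      rw [key, eCore, hplug1]
    rw [hgoal]
    exact KEY n₁ m _ _ (Term.rename (rupn (depthK Kin + 1) (Term.lr 0)) u) v hv hb (le_refl _)
termination_by n₁ n₂ p _ _ _ _ _ _ => (n₁, n₂, p)
decreasing_by
  all_goals simp_wf
  all_goals first
    | (apply Prod.Lex.left; omega)
    | (apply Prod.Lex.right; first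
        | (apply Prod.Lex.left; omega)
        | (apply Prod.Lex.right; omega))
/-! ### Bridge between appList and plug -/

theorem appList_cons (H a : Term) (l : List Term) :
    appList H (a :: l) = appList (.app H a) l := rfl

theorem appList_append (H : Term) (l₁ l₂ : List Term) :
    appList H (l₁ ++ l₂) = appList (appList H l₁) l₂ := by
  unfold appList
  exact List.foldl_append

theorem appList_snoc (H a : Term) (l : List Term) :
    appList H (l ++ [a]) = .app (appList H l) a := by
  rw [appList_append]; rfl

theorem appList_plug (H : Term) (l : List Term) :
    appList H l = plug (l.map .appL) H := by
  induction l generalizing H with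
  | nil => rfl
  | cons a l ih => rw [appList_cons, ih]; rfl

theorem depthK_map_appL (l : List Term) : depthK (l.map .appL) = 0 := by
  induction l with
  | nil => rfl
  | cons a l ih => simpa [depthK] using ih

/-- The key lemma, in `SN`/`appList` form. -/
theorem key' (u v : Term) (args : List Term) (hv : SN v)
    (hU : SN (appList (Term.subst u 0 v) args)) : SN (appList (.app (.lam u) v) args) := by
  rcases bnd_of_sn hv with ⟨n₁, h₁⟩
  rcases bnd_of_sn hU with ⟨n₂, h₂⟩
  have hl : Term.liftn (depthK (args.map .appL)) v = v := by
    rw [depthK_map_appL, Term.liftn_zero]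
  have hcall := KEY n₁ n₂
    (Term.pint (plug (args.map .appL) (.app (.lam u) (Term.liftn (depthK (args.map .appL)) v))))
    (args.map .appL) u v h₁
    (by rw [hl, ← appList_plug]; exact h₂) (le_refl _)
  rw [hl, ← appList_plug] at hcall
  exact hcall

/-! ### SN for variable-headed applications -/

theorem appList_var_ne_lam (args : List Term) (n : ℕ) (Y : Term) :
    appList (.var n) args ≠ .lam Y := by
  induction args using List.reverseRecOn with
  | nil => intro h; cases h
  | append_singleton l a _ => rw [appList_snoc]; intro h; cases h

theorem appList_var_eq_app {args : List Term} {n : ℕ} {A B : Term}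
    (h : appList (.var n) args = .app A B) :
    ∃ l, args = l ++ [B] ∧ A = appList (.var n) l := by
  induction args using List.reverseRecOn with
  | nil => cases h
  | append_singleton l a _ =>
      rw [appList_snoc] at h
      obtain ⟨h1, h2⟩ := Term.app.inj h
      exact ⟨l, by rw [h2], h1.symm⟩

theorem varApp_cases (args : List Term) : ∀ (n : ℕ) (t₁ : Term) (r : Rule),
    Step r (appList (.var n) args) t₁ →
    (∃ pre a a₁ post, args = pre ++ a :: post ∧ Step r a a₁ ∧
        t₁ = appList (.var n) (pre ++ a₁ :: post)) ∨
    (∃ pre Z W post, args = pre ++ (Term.app (.lam Z) W) :: post ∧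
        t₁ = appList (.app (.lam (.app (Term.lift 0 (appList (.var n) pre)) Z)) W) post) := by
  induction args using List.reverseRecOn with
  | nil =>
      intro n t₁ r h
      cases h
  | append_singleton l a ih =>
      intro n t₁ r h
      rw [appList_snoc] at h
      generalize hx : Term.app (appList (.var n) l) a = x at h
      cases h with
      | beta M N =>
          obtain ⟨h1, _⟩ := Term.app.inj hx
          exact absurd h1 (appList_var_ne_lam l n _)
      | delta M N =>
          obtain ⟨h1, _⟩ := Term.app.inj hx
          exact absurd h1 (appList_var_ne_lam l n _)
      | gamma M N P =>
          obtain ⟨h1, _⟩ := Term.app.inj hx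
          obtain ⟨l', _, hA⟩ := appList_var_eq_app h1
          exact absurd hA.symm (appList_var_ne_lam l' n _)
      | assoc M N P =>
          obtain ⟨h1, h2⟩ := Term.app.inj hx
          refine Or.inr ⟨l, N, P, [], by rw [h2], ?_⟩
          rw [← h1]
          rfl
      | appCongL w h =>
          obtain ⟨h1, h2⟩ := Term.app.inj hx
          subst h1; subst h2
          rcases ih n _ r h with ⟨pre, b, b₁, post, rfl, hs, rfl⟩ |
              ⟨pre, Z, W, post, rfl, rfl⟩
          · refine Or.inl ⟨pre, b, b₁, post ++ [a], by simp, hs, ?_⟩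
            rw [← List.cons_append, ← List.append_assoc, appList_snoc]
          · refine Or.inr ⟨pre, Z, W, post ++ [a], by simp, ?_⟩
            rw [appList_snoc]
      | appCongR w h =>
          obtain ⟨h1, h2⟩ := Term.app.inj hx
          subst h1; subst h2
          exact Or.inl ⟨l, a, _, [], by simp, h, by rw [appList_snoc]⟩
      | lamCong h => exact absurd hx (by simp)

/-- Summed bounds for a list of terms. -/
def BndL : List Term → ℕ → Prop
  | [], _ => True
  | a :: l, m => ∃ k j, Bnd k a ∧ BndL l j ∧ m = k + j

theorem bndl_of_sn : ∀ (l : List Term), (∀ a ∈ l, SN a) → ∃ m, BndL l m := by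
  intro l h
  induction l with
  | nil => exact ⟨0, trivial⟩
  | cons a l ih =>
      rcases bnd_of_sn (h a (by simp)) with ⟨k, hk⟩
      rcases ih (fun x hx => h x (by simp [hx])) with ⟨j, hj⟩
      exact ⟨k + j, k, j, hk, hj, rfl⟩

theorem bndl_elem : ∀ (pre : List Term) (a : Term) (post : List Term) (m : ℕ),
    BndL (pre ++ a :: post) m →
    ∃ k j, m = k + j ∧ Bnd k a ∧
      (∀ a' k', Bnd k' a' → BndL (pre ++ a' :: post) (k' + j)) := by
  intro pre
  induction pre with
  | nil =>
      rintro a post m ⟨k, j, hk, hpost, rfl⟩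
      exact ⟨k, j, rfl, hk, fun a' k' h' => ⟨k', j, h', hpost, rfl⟩⟩
  | cons p pre ih =>
      rintro a post m ⟨kp, j', hp, hrest, rfl⟩
      rcases ih a post j' hrest with ⟨k, j₂, rfl, hk, rep⟩
      refine ⟨k, kp + j₂, by omega, hk, ?_⟩
      intro a' k' h'
      exact ⟨kp, k' + j₂, hp, rep a' k' h', by omega⟩

theorem snVarApp : ∀ (m : ℕ) (args : List Term) (n : ℕ),
    BndL args m → SN (appList (.var n) args) := by
  intro m
  induction m using Nat.strong_induction_on with
  | _ m ih =>
      intro args n hm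
      constructor
      intro t₁ hs
      rcases hs with ⟨r, hr⟩
      rcases varApp_cases args n t₁ r hr with
          ⟨pre, a, a₁, post, rfl, hstep, rfl⟩ | ⟨pre, Z, W, post, rfl, rfl⟩
      · rcases bndl_elem pre a post m hm with ⟨k, j, rfl, hk, rep⟩
        rcases bnd_step hk ⟨r, hstep⟩ with ⟨k₁, hk₁, hb₁⟩
        exact ih (k₁ + j) (by omega) _ n (rep a₁ k₁ hb₁)
      · rcases bndl_elem pre _ post m hm with ⟨k, j, rfl, hk, rep⟩
        rcases bnd_step hk ⟨Rule.beta, Step.beta Z W⟩ with ⟨kβ, hkβ, hbβ⟩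
        have hS : SN (appList (.var n) (pre ++ Term.subst Z 0 W :: post)) :=
          ih (kβ + j) (by omega) _ n (rep _ kβ hbβ)
        rcases bnd_arg_lt hk with ⟨kW, hkW, hbW⟩
        apply key'
        · exact sn_of_bnd kW W hbW
        · rw [show Term.subst (.app (Term.lift 0 (appList (.var n) pre)) Z) 0 W
            = Term.app (Term.subst (Term.lift 0 (appList (.var n) pre)) 0 W)
              (Term.subst Z 0 W) from rfl]
          rw [Term.subst_lift_cancel]
          rw [appList_append] at hS
          exact hS
/-! ### Reducibility candidates -/

mutual
def RedS : STy → Term → Prop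
  | .atom _, t => SN t
  | .arrow A S, t => ∀ w, Red A w → RedS S (.app t w)
def Red : Ty → Term → Prop
  | .simple S, t => RedS S t
  | .inter S T, t => RedS S t ∧ Red T t
end

theorem sn_var_apps {n : ℕ} {args : List Term} (h : ∀ a ∈ args, SN a) :
    SN (appList (.var n) args) := by
  rcases bndl_of_sn args h with ⟨m, hm⟩
  exact snVarApp m args n hm

mutual
theorem redS_neut : ∀ (S : STy) (n : ℕ) (args : List Term),
    (∀ a ∈ args, SN a) → RedS S (appList (.var n) args)
  | .atom i, n, args, h => sn_var_apps h
  | .arrow A S, n, args, h => by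
      intro w hw
      have hw' : SN w := red_sn A w hw
      have := redS_neut S n (args ++ [w]) (by
        intro a ha
        rcases List.mem_append.mp ha with ha | ha
        · exact h a ha
        · rcases List.mem_singleton.mp ha with rfl
          exact hw')
      rw [appList_snoc] at this
      exact this

theorem redS_sn : ∀ (S : STy) (t : Term), RedS S t → SN t
  | .atom i, t, h => h
  | .arrow A S, t, h => by
      have h0 : Red A (.var 0) := red_neut A 0 [] (by simp)
      have h1 : SN (.app t (.var 0)) := redS_sn S _ (h _ h0)
      exact sn_app_left' h1

theorem red_neut : ∀ (A : Ty) (n : ℕ) (args : List Term),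
    (∀ a ∈ args, SN a) → Red A (appList (.var n) args)
  | .simple S, n, args, h => redS_neut S n args h
  | .inter S T, n, args, h => ⟨redS_neut S n args h, red_neut T n args h⟩

theorem red_sn : ∀ (A : Ty) (t : Term), Red A t → SN t
  | .simple S, t, h => redS_sn S t h
  | .inter S T, t, h => redS_sn S t h.1
end

theorem closS : ∀ (S : STy) (u v : Term) (args : List Term), SN v →
    RedS S (appList (Term.subst u 0 v) args) →
    RedS S (appList (.app (.lam u) v) args)
  | .atom i, u, v, args, hv, h => key' u v args hv h
  | .arrow A S, u, v, args, hv, h => by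
      intro w hw
      have := closS S u v (args ++ [w]) hv (by
        rw [appList_snoc]
        exact h w hw)
      rw [appList_snoc] at this
      exact this

theorem closT : ∀ (A : Ty) (u v : Term) (args : List Term), SN v →
    Red A (appList (Term.subst u 0 v) args) →
    Red A (appList (.app (.lam u) v) args)
  | .simple S, u, v, args, hv, h => closS S u v args hv h
  | .inter S T, u, v, args, hv, h => ⟨closS S u v args hv h.1, closT T u v args hv h.2⟩

/-! ### Soundness of typing -/

/-- Extend a substitution with a new head value. -/
def scons (w : Term) (σ : ℕ → Term) : ℕ → Term
  | 0 => w
  | n + 1 => σ n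

theorem subst_msubst_scons (σ : ℕ → Term) (M w : Term) :
    Term.subst (Term.msubst (Term.sup σ) M) 0 w = Term.msubst (scons w σ) M := by
  rw [Term.subst_eq_msubst, Term.msubst_msubst]
  apply Term.msubst_ext
  intro n
  cases n with
  | zero => rfl
  | succ n =>
      show Term.msubst (Term.sb 0 w) (Term.rename Nat.succ (σ n)) = σ n
      rw [Term.msubst_rename]
      rw [Term.msubst_ext (σ' := Term.var)]
      · exact Term.msubst_id _
      · intro m
        simp [Term.sb]

def RedCtx (σ : ℕ → Term) (Γ : List Ty) : Prop :=
  ∀ n A, Γ[n]? = some A → Red A (σ n)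

theorem sound {Γ : List Ty} {t : Term} {A : Ty} (h : Typing Γ t A) :
    ∀ σ, RedCtx σ Γ → Red A (Term.msubst σ t) := by
  induction h with
  | var hn =>
      intro σ hσ
      exact hσ _ _ hn
  | app hM hN ihM ihN =>
      intro σ hσ
      exact ihM σ hσ _ (ihN σ hσ)
  | @lam Γ M A B hM ih =>
      intro σ hσ
      show RedS (.arrow A B) (.lam (Term.msubst (Term.sup σ) M))
      intro w hw
      have hc := closS B (Term.msubst (Term.sup σ) M) w [] (red_sn A w hw) (by
        show RedS B (Term.subst (Term.msubst (Term.sup σ) M) 0 w)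
        rw [subst_msubst_scons]
        refine ih (scons w σ) ?_
        intro n C hC
        cases n with
        | zero =>
            simp only [List.getElem?_cons_zero, Option.some.injEq] at hC
            subst hC
            exact hw
        | succ n =>
            simp only [List.getElem?_cons_succ] at hC
            exact hσ n C hC)
      exact hc
  | interI h1 h2 ih1 ih2 =>
      intro σ hσ
      exact ⟨ih1 σ hσ, ih2 σ hσ⟩
  | interE1 h ih =>
      intro σ hσ
      exact (ih σ hσ).1
  | interE2 h ih =>
      intro σ hσ
      exact (ih σ hσ).2

/-- Every term typable in system D is SN for the union of β, δ, γ, assoc. -/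
theorem sn_of_typable (Γ : List Ty) (t : Term) (A : Ty) (h : Typing Γ t A) :
    SN t := by
  have hσ : RedCtx Term.var Γ := by
    intro n B _
    exact red_neut B n [] (by simp)
  have h1 := sound h Term.var hσ
  rw [Term.msubst_id] at h1
  exact red_sn A t h1
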